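/- arXiv:1108.6143 — 11 statements merged into one kernel-verified Lean document; each statement's English description precedes it below -/
import Mathlib

section
/- If a finite simple graph G admits an n-rainbow coloring c, then the set of edges whose two endpoints receive the same color under c forms a perfect matching of G. -/
open SimpleGraph

/-- `c` is an `n`-rainbow coloring of `G`: every color appears exactly once in the
open neighborhood of each vertex. -/
def IsRainbow {V : Type*} {n : ℕ} (G : SimpleGraph V) (c : V → Fin n) : Prop :=
  ∀ v : V, ∀ i : Fin n, ∃! w : V, G.Adj v w ∧ c w = i

/-- Switching `G` at the vertex `v`: reverse the adjacency between `v` and all other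
vertices. -/
def switch {V : Type*} (G : SimpleGraph V) (v : V) : SimpleGraph V :=
  SimpleGraph.fromRel (fun x y => Xor' (G.Adj x y) (x = v ∨ y = v))

/-- The double `G̃` of `G`: vertices `inl i` (= `i`) and `inr i` (= `i'`), with edges
`(i,i')`; `(i,j)` and `(i',j')` for edges `(i,j)` of `G`; and `(i,j')`, `(i',j)` for
non-edges `i ≠ j` of `G`. -/
def double {V : Type*} (G : SimpleGraph V) : SimpleGraph (V ⊕ V) :=
  SimpleGraph.fromRel (fun x y =>
    match x, y with
    | .inl i, .inl j => G.Adj i j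
    | .inr i, .inr j => G.Adj i j
    | .inl i, .inr j => i = j ∨ ¬ G.Adj i j
    | .inr i, .inl j => i = j ∨ ¬ G.Adj i j)

open Classical in
/-- The Seidel matrix of `G`: zero diagonal, `1` for edges, `-1` for non-edges. -/
noncomputable def seidel {V : Type*} (G : SimpleGraph V) : Matrix V V ℝ :=
  fun i j => if i = j then 0 else if G.Adj i j then 1 else -1

/-- A Seidel matrix: symmetric, zero diagonal, off-diagonal entries `±1`. -/
def IsSeidel {m : Type*} (A : Matrix m m ℝ) : Prop :=
  A.IsSymm ∧ (∀ i, A i i = 0) ∧ ∀ i j, i ≠ j → A i j = 1 ∨ A i j = -1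

/-- A permutation matrix. -/
def IsPermMatrix {m : Type*} [DecidableEq m] (P : Matrix m m ℝ) : Prop :=
  ∃ σ : Equiv.Perm m, P = σ.permMatrix ℝ

/-- A line (row or column) with exactly one nonzero entry, equal to `±1`. -/
def SignedPermLine {m : Type*} (r : m → ℝ) : Prop :=
  ∃ j, (r j = 1 ∨ r j = -1) ∧ ∀ k, k ≠ j → r k = 0

/-- A line with either exactly one nonzero entry `±1`, or exactly two nonzero entries,
each `±1/2`. -/
def HalfLine {m : Type*} (r : m → ℝ) : Prop :=
  SignedPermLine r ∨
    ∃ j k, j ≠ k ∧ (r j = 1/2 ∨ r j = -1/2) ∧ (r k = 1/2 ∨ r k = -1/2) ∧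
      ∀ l, l ≠ j → l ≠ k → r l = 0

/-- A signed permutation matrix: exactly one nonzero entry, `±1`, in every row and column. -/
def IsSignedPermMatrix {m : Type*} (Q : Matrix m m ℝ) : Prop :=
  (∀ i, SignedPermLine (Q i)) ∧ (∀ j, SignedPermLine (fun i => Q i j))

/-- A signed half-permutation matrix. -/
def IsSignedHalfPermMatrix {m : Type*} (S : Matrix m m ℝ) : Prop :=
  (∀ i, HalfLine (S i)) ∧ (∀ j, HalfLine (fun i => S i j))

/-- `T` is an integration of the signed half-permutation matrix `S`. -/
def IsIntegration {m : Type*} (T S : Matrix m m ℝ) : Prop :=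
  IsSignedPermMatrix T ∧
    ∀ i j, ((S i j = 1 ∨ S i j = -1) → T i j = S i j) ∧
      ((S i j = 1/2 ∨ S i j = -1/2) → T i j = 2 * S i j ∨ T i j = 0) ∧
      (S i j = 0 → T i j = 0)

/-- Labeled switching equivalence: a sequence of switchings transforms `G` into `G'`. -/
def SwitchEquiv {V : Type*} (G G' : SimpleGraph V) : Prop :=
  Relation.ReflTransGen (fun H H' => ∃ v, H' = switch H v) G G'

/-- Switching equivalence allowing relabeling. -/
def SwitchEquivIso {V : Type*} (G G' : SimpleGraph V) : Prop :=
  ∃ H, SwitchEquiv G H ∧ Nonempty (H ≃g G')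

/-- The subgraph of `G` consisting of all edges whose endpoints get the same color. -/
def sameColorSubgraph {V : Type*} {n : ℕ} (G : SimpleGraph V) (c : V → Fin n) :
    G.Subgraph where
  verts := Set.univ
  Adj a b := G.Adj a b ∧ c a = c b
  adj_sub h := h.1
  edge_vert _ := Set.mem_univ _
  symm := ⟨fun a b h => ⟨h.1.symm, h.2.symm⟩⟩

/-- The `2n × 2n` block matrix `M̃ = [[M, I−M],[I−M, M]]`. -/
def tildeMat {n : ℕ} (M : Matrix (Fin n) (Fin n) ℝ) :
    Matrix (Fin n ⊕ Fin n) (Fin n ⊕ Fin n) ℝ :=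
  Matrix.fromBlocks M (1 - M) (1 - M) M

/-- the same-colored edges form a perfect matching. -/
theorem rainbow_sameColor_perfectMatching {V : Type*} [Fintype V] {n : ℕ}
    (G : SimpleGraph V) (c : V → Fin n) (h : IsRainbow G c) :
    (sameColorSubgraph G c).IsPerfectMatching := by
  rw [SimpleGraph.Subgraph.isPerfectMatching_iff]
  intro v
  obtain ⟨w, ⟨hadj, hc⟩, huniq⟩ := h v (c v)
  refine ⟨w, ⟨hadj, hc.symm⟩, ?_⟩
  intro y ⟨hy, hcy⟩
  exact huniq y ⟨hy, hcy.symm⟩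
end

section
/- If a finite connected simple graph G admits an n-rainbow coloring, then each color class has the same cardinality; in particular, the number of vertices of a connected n-rainbow graph is a multiple of n. -/
open SimpleGraph

/-- for a connected rainbow graph all color classes have the same size,
and in particular `n` divides the number of vertices. -/
theorem rainbow_color_classes_equal {V : Type*} [Fintype V] [DecidableEq V] {n : ℕ}
    (G : SimpleGraph V) (c : V → Fin n) (hconn : G.Connected) (h : IsRainbow G c) :
    (∀ i j : Fin n,
        (Finset.univ.filter fun v => c v = i).card
          = (Finset.univ.filter fun v => c v = j).card) ∧
      n ∣ Fintype.card V := by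
  classical
  have hcard1 : ∀ (v : V) (b : Fin n),
      (Finset.univ.filter fun w => c w = b ∧ G.Adj v w).card = 1 := by
    intro v b
    obtain ⟨w, hw, huniq⟩ := h v b
    rw [Finset.card_eq_one]
    refine ⟨w, ?_⟩
    ext x
    simp only [Finset.mem_filter, Finset.mem_univ, true_and, Finset.mem_singleton]
    constructor
    · rintro ⟨h1, h2⟩; exact huniq x ⟨h2, h1⟩
    · rintro rfl; exact ⟨hw.2, hw.1⟩
  set N : Fin n → Fin n → ℕ := fun a b =>
    ∑ v ∈ Finset.univ.filter (fun v => c v = a),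
      ∑ w ∈ Finset.univ, (if c w = b ∧ G.Adj v w then 1 else 0) with hN
  have hNcard : ∀ a b, N a b = (Finset.univ.filter fun v => c v = a).card := by
    intro a b
    rw [hN]
    simp only
    rw [Finset.card_eq_sum_ones]
    apply Finset.sum_congr rfl
    intro v _
    rw [← Finset.card_filter]
    exact hcard1 v b
  have hNsymm : ∀ a b, N a b = N b a := by
    intro a b
    rw [hN]
    simp only
    have push : ∀ (p : Prop) [Decidable p] (f : V → ℕ),
        (if p then ∑ w : V, f w else 0) = ∑ w : V, if p then f w else 0 := by
      intro p _ f; split <;> simp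
    simp only [Finset.sum_filter, push]
    rw [Finset.sum_comm]
    apply Finset.sum_congr rfl
    intro w _
    apply Finset.sum_congr rfl
    intro v _
    by_cases h1 : c v = a <;> by_cases h2 : c w = b <;>
      simp [h1, h2, SimpleGraph.adj_comm G w v]
  have key : ∀ i j : Fin n,
      (Finset.univ.filter fun v => c v = i).card
        = (Finset.univ.filter fun v => c v = j).card := by
    intro i j
    rw [← hNcard i j, hNsymm i j, hNcard j i]
  refine ⟨key, ?_⟩
  have hsum : Fintype.card V = ∑ i : Fin n, (Finset.univ.filter fun v => c v = i).card := by
    rw [← Finset.card_univ]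
    exact Finset.card_eq_sum_card_fiberwise (fun x _ => Finset.mem_univ (c x))
  rcases Nat.eq_zero_or_pos n with hn | hn
  · subst hn
    rw [hsum]
    simp
  · obtain ⟨i0⟩ : Nonempty (Fin n) := ⟨⟨0, hn⟩⟩
    refine ⟨(Finset.univ.filter fun v => c v = i0).card, ?_⟩
    rw [hsum]
    rw [Finset.sum_congr rfl (fun i _ => key i i0)]
    simp [mul_comm]
end

section
/- If a finite connected simple graph G admits an n-rainbow coloring, then the number of vertices of G is a multiple of 2n. -/
open SimpleGraph

private lemma even_card_invol {α : Type*} [DecidableEq α] (f : α → α) :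
    ∀ s : Finset α, (∀ a ∈ s, f a ∈ s) → (∀ a ∈ s, f (f a) = a) → (∀ a ∈ s, f a ≠ a) →
      Even s.card := by
  intro s
  induction s using Finset.strongInduction with
  | _ s ih =>
    intro hmem hinv hne
    rcases s.eq_empty_or_nonempty with rfl | ⟨a, ha⟩
    · simp
    · have hfa : f a ∈ s := hmem a ha
      have hane : f a ≠ a := hne a ha
      have hffa : f (f a) = a := hinv a ha
      have hpair : ({a, f a} : Finset α) ⊆ s := by
        intro x hx; simp only [Finset.mem_insert, Finset.mem_singleton] at hx
        rcases hx with rfl | rfl <;> assumption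
      set s' := s \ {a, f a} with hs'
      have hss : s' ⊂ s := Finset.sdiff_ssubset hpair ⟨a, by simp⟩
      have hmem' : ∀ b ∈ s', b ∈ s ∧ b ≠ a ∧ b ≠ f a := by
        intro b hb
        simp only [hs', Finset.mem_sdiff, Finset.mem_insert, Finset.mem_singleton] at hb
        tauto
      have h1 : ∀ b ∈ s', f b ∈ s' := by
        intro b hb
        obtain ⟨hbs, hba, hbfa⟩ := hmem' b hb
        simp only [hs', Finset.mem_sdiff, Finset.mem_insert, Finset.mem_singleton]
        refine ⟨hmem b hbs, ?_⟩
        rintro (hfb | hfb)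
        · apply hbfa; rw [← hfb, hinv b hbs]
        · apply hba
          have := hinv b hbs; rw [hfb, hffa] at this; exact this.symm
      have hev : Even s'.card := ih s' hss h1
        (fun b hb => hinv b (hmem' b hb).1) (fun b hb => hne b (hmem' b hb).1)
      have h2 : 2 ≤ s.card := by
        have := Finset.card_le_card hpair
        rwa [Finset.card_pair hane.symm] at this
      have hcard : s.card = s'.card + 2 := by
        rw [hs', Finset.card_sdiff_of_subset hpair, Finset.card_pair hane.symm]; omega
      rw [hcard]
      exact hev.add even_two

/-- the number of vertices of a connected `n`-rainbow graph is a multiple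
of `2n`. -/
theorem rainbow_card_dvd {V : Type*} [Fintype V] {n : ℕ} (G : SimpleGraph V)
    (c : V → Fin n) (hconn : G.Connected) (h : IsRainbow G c) :
    2 * n ∣ Fintype.card V := by
  classical
  obtain ⟨v0⟩ := hconn.nonempty
  rcases Nat.eq_zero_or_pos n with rfl | hn
  · exact (c v0).elim0
  -- for each vertex v and color i, the unique neighbor of v with color i
  have hg : ∀ (v : V) (i : Fin n), G.Adj v ((h v i).choose) ∧ c ((h v i).choose) = i :=
    fun v i => (h v i).choose_spec.1
  have huniq : ∀ (v : V) (i : Fin n) (w : V), G.Adj v w → c w = i → w = (h v i).choose :=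
    fun v i w ha hc => (h v i).choose_spec.2 w ⟨ha, hc⟩
  set g : Fin n → V → V := fun i v => (h v i).choose with hgdef
  -- color classes
  set cls : Fin n → Finset V := fun i => Finset.univ.filter (fun v => c v = i) with hcls
  -- all color classes have the same cardinality
  have hbij : ∀ i j : Fin n, (cls i).card = (cls j).card := by
    intro i j
    apply Finset.card_bij (fun v _ => g j v)
    · intro v hv
      simp only [hcls, Finset.mem_filter, Finset.mem_univ, true_and]
      exact (hg v j).2
    · intro v hv v' hv' heq
      simp only [hcls, Finset.mem_filter, Finset.mem_univ, true_and] at hv hv'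
      have h1 : v = (h (g j v) i).choose :=
        huniq (g j v) i v (hg v j).1.symm hv
      have hadj : G.Adj (g j v) v' := by rw [heq]; exact (hg v' j).1.symm
      have h2 : v' = (h (g j v) i).choose := huniq (g j v) i v' hadj hv'
      rw [h1, h2]
    · intro w hw
      simp only [hcls, Finset.mem_filter, Finset.mem_univ, true_and] at hw
      refine ⟨g i w, ?_, ?_⟩
      · simp only [hcls, Finset.mem_filter, Finset.mem_univ, true_and]
        exact (hg w i).2
      · exact (huniq (g i w) j w (hg w i).1.symm hw).symm
  -- each color class has even cardinality, via the same-color matching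
  set f : V → V := fun v => g (c v) v with hfdef
  have hfadj : ∀ v, G.Adj v (f v) := fun v => (hg v (c v)).1
  have hfc : ∀ v, c (f v) = c v := fun v => (hg v (c v)).2
  have hfinv : ∀ v, f (f v) = v := by
    intro v
    have h2 : v = (h (f v) (c (f v))).choose :=
      huniq (f v) (c (f v)) v (hfadj v).symm (hfc v).symm
    exact h2.symm
  have hfne : ∀ v, f v ≠ v := fun v => fun e => (hfadj v).ne' e
  have heven : ∀ i, Even ((cls i).card) := by
    intro i
    apply even_card_invol f
    · intro a hamem
      simp only [hcls, Finset.mem_filter, Finset.mem_univ, true_and] at hamem ⊢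
      rw [hfc a, hamem]
    · intro a _; exact hfinv a
    · intro a _; exact hfne a
  -- sum up
  have hsum : Fintype.card V = ∑ i : Fin n, (cls i).card := by
    rw [← Finset.card_univ]
    exact Finset.card_eq_sum_card_fiberwise (fun x _ => Finset.mem_univ (c x))
  set i0 : Fin n := ⟨0, hn⟩ with hi0
  obtain ⟨k, hk⟩ := heven i0
  have : Fintype.card V = n * (cls i0).card := by
    rw [hsum]
    rw [Finset.sum_congr rfl (fun i _ => hbij i i0)]
    simp [Finset.sum_const, mul_comm]
  refine ⟨k, ?_⟩
  rw [this, hk]; ring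
end

section
/- For any simple graph G on vertex set {1,...,n}, the graph G̃ on vertex set {1,...,n} ⊔ {1',...,n'}, with edges (i,i') for all i, edges (i,j) and (i',j') whenever (i,j) ∈ E(G), and edges (i,j') and (i',j) whenever i ≠ j and (i,j) ∉ E(G), admits an n-rainbow coloring. -/
open SimpleGraph

/-- the double of any graph on `n` vertices admits an `n`-rainbow
coloring. -/
theorem double_isRainbow {n : ℕ} (G : SimpleGraph (Fin n)) :
    ∃ c : (Fin n ⊕ Fin n) → Fin n, IsRainbow (double G) c := by
  refine ⟨Sum.elim id id, ?_⟩
  have hll : ∀ a b : Fin n, (double G).Adj (.inl a) (.inl b) ↔ G.Adj a b := by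
    intro a b
    simp only [double, SimpleGraph.fromRel_adj, ne_eq, Sum.inl.injEq]
    constructor
    · rintro ⟨h, h1 | h1⟩ <;> [exact h1; exact h1.symm]
    · intro h; exact ⟨h.ne, Or.inl h⟩
  have hrr : ∀ a b : Fin n, (double G).Adj (.inr a) (.inr b) ↔ G.Adj a b := by
    intro a b
    simp only [double, SimpleGraph.fromRel_adj, ne_eq, Sum.inr.injEq]
    constructor
    · rintro ⟨h, h1 | h1⟩ <;> [exact h1; exact h1.symm]
    · intro h; exact ⟨h.ne, Or.inl h⟩
  have hlr : ∀ a b : Fin n, (double G).Adj (.inl a) (.inr b) ↔ (a = b ∨ ¬ G.Adj a b) := by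
    intro a b
    simp only [double, SimpleGraph.fromRel_adj, ne_eq]
    constructor
    · rintro ⟨_, h1 | h1⟩
      · exact h1
      · rcases h1 with h1 | h1
        · exact Or.inl h1.symm
        · exact Or.inr (fun h => h1 h.symm)
    · intro h; exact ⟨by simp, Or.inl h⟩
  have hrl : ∀ a b : Fin n, (double G).Adj (.inr a) (.inl b) ↔ (a = b ∨ ¬ G.Adj a b) := by
    intro a b
    rw [(double G).adj_comm, hlr]
    constructor <;> rintro (h | h)
    · exact Or.inl h.symm
    · exact Or.inr (fun hh => h hh.symm)
    · exact Or.inl h.symm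
    · exact Or.inr (fun hh => h hh.symm)
  rintro (a | a) i
  · by_cases h : G.Adj a i
    · refine ⟨.inl i, ⟨(hll a i).mpr h, rfl⟩, ?_⟩
      rintro (b | b) ⟨hadj, hc⟩ <;> simp only [Sum.elim_inl, Sum.elim_inr, id] at hc <;> subst hc
      · rfl
      · rcases (hlr a b).mp hadj with rfl | hni
        · exact absurd h (G.irrefl)
        · exact absurd h hni
    · refine ⟨.inr i, ⟨(hlr a i).mpr (Or.inr h), rfl⟩, ?_⟩
      rintro (b | b) ⟨hadj, hc⟩ <;> simp only [Sum.elim_inl, Sum.elim_inr, id] at hc <;> subst hc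
      · exact absurd ((hll a b).mp hadj) h
      · rfl
  · by_cases h : G.Adj a i
    · refine ⟨.inr i, ⟨(hrr a i).mpr h, rfl⟩, ?_⟩
      rintro (b | b) ⟨hadj, hc⟩ <;> simp only [Sum.elim_inl, Sum.elim_inr, id] at hc <;> subst hc
      · rcases (hrl a b).mp hadj with rfl | hni
        · exact absurd h (G.irrefl)
        · exact absurd h hni
      · rfl
    · refine ⟨.inl i, ⟨(hrl a i).mpr (Or.inr h), rfl⟩, ?_⟩
      rintro (b | b) ⟨hadj, hc⟩ <;> simp only [Sum.elim_inl, Sum.elim_inr, id] at hc <;> subst hc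
      · rfl
      · exact absurd ((hrr a b).mp hadj) h
end

section
/- Let G be a simple graph on {1,...,n} and for a vertex v, let G_v denote the graph obtained by switching at v (reversing adjacency between v and every other vertex). Then the doubled graph G̃ is isomorphic to the doubled graph (G_v)~; explicitly, the map interchanging the labels v and v' and fixing all other vertices is a graph isomorphism from (G_v)~ to G̃. -/
open SimpleGraph

/-- swapping the labels `v` and `v'` gives an isomorphism from the double
of the switch of `G` at `v` to the double of `G`. -/
theorem double_switch_iso {n : ℕ} (G : SimpleGraph (Fin n)) (v : Fin n) :
    ∃ φ : double (switch G v) ≃g double G,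
      (∀ i : Fin n, φ (Sum.inl i) = if i = v then Sum.inr i else Sum.inl i) ∧
      (∀ i : Fin n, φ (Sum.inr i) = if i = v then Sum.inl i else Sum.inr i) := by

  classical
  have adj_key : ∀ x y, (double (switch G v)).Adj x y ↔
      (double G).Adj (Equiv.swap (Sum.inl v) (Sum.inr v) x)
        (Equiv.swap (Sum.inl v) (Sum.inr v) y) := by
    rintro (i | i) (j | j) <;>
      by_cases hi : i = v <;> by_cases hj : j = v <;>
      subst_vars <;>
      simp_all [double, switch, SimpleGraph.fromRel_adj, Equiv.swap_apply_def,
        Xor', Xor, G.irrefl] <;>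
      tauto
  refine ⟨⟨Equiv.swap (Sum.inl v) (Sum.inr v), ?_⟩, ?_, ?_⟩
  · intro a b; exact (adj_key a b).symm
  · intro i
    by_cases h : i = v <;> simp [h, Equiv.swap_apply_def, RelIso.coe_fn_mk]
  · intro i
    by_cases h : i = v <;> simp [h, Equiv.swap_apply_def, RelIso.coe_fn_mk]
end

section
/- If two graphs G and G' on {1,...,n} are switching equivalent, then their doubled graphs G̃ and G̃' are isomorphic as unlabeled graphs. -/
open SimpleGraph

lemma double_adj' {V : Type*} (G : SimpleGraph V) (x y : V ⊕ V) :
    (double G).Adj x y ↔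
      match x, y with
      | .inl i, .inl j => G.Adj i j
      | .inr i, .inr j => G.Adj i j
      | .inl i, .inr j => i = j ∨ ¬ G.Adj i j
      | .inr i, .inl j => i = j ∨ ¬ G.Adj i j := by
  rcases x with i | i <;> rcases y with j | j <;>
    simp only [double, SimpleGraph.fromRel_adj, ne_eq, Sum.inl.injEq, Sum.inr.injEq,
      reduceCtorEq, not_false_eq_true, true_and, Sum.inl_ne_inr] <;>
    have hc := G.adj_comm i j <;>
    have hne : G.Adj i j → ¬ i = j := fun h => h.ne <;>
    have hes : i = j ↔ j = i := eq_comm <;>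
    tauto

lemma switch_adj' {V : Type*} (G : SimpleGraph V) (v x y : V) :
    (switch G v).Adj x y ↔ x ≠ y ∧ Xor' (G.Adj x y) (x = v ∨ y = v) := by
  simp only [switch, SimpleGraph.fromRel_adj, Xor', Xor]
  have hc := G.adj_comm x y
  constructor
  · rintro ⟨hne, h⟩
    refine ⟨hne, ?_⟩
    tauto
  · rintro ⟨hne, h⟩; exact ⟨hne, Or.inl h⟩

lemma double_switch_iso_s7 {V : Type*} [DecidableEq V] (G : SimpleGraph V) (v : V) :
    Nonempty (double G ≃g double (switch G v)) := by
  classical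
  refine ⟨⟨Equiv.swap (Sum.inl v) (Sum.inr v), ?_⟩⟩
  intro x y
  have s1 : Equiv.swap (Sum.inl v) (Sum.inr v) (Sum.inl v) = Sum.inr v :=
    Equiv.swap_apply_left _ _
  have s2 : Equiv.swap (Sum.inl v) (Sum.inr v) (Sum.inr v) = Sum.inl v :=
    Equiv.swap_apply_right _ _
  have s3 : ∀ i : V, i ≠ v → Equiv.swap (Sum.inl v) (Sum.inr v) (Sum.inl i) = Sum.inl i :=
    fun i hi => Equiv.swap_apply_of_ne_of_ne (by simpa using hi) (by simp)
  have s4 : ∀ i : V, i ≠ v → Equiv.swap (Sum.inl v) (Sum.inr v) (Sum.inr i) = Sum.inr i :=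
    fun i hi => Equiv.swap_apply_of_ne_of_ne (by simp) (by simpa using hi)
  obtain i | i := x <;> obtain j | j := y
  · rcases eq_or_ne i v with hi' | hi
    · rcases eq_or_ne j v with hj' | hj
      · rw [hi', hj']
        simp only [s1, s2, double_adj', switch_adj', Xor', Xor, ne_eq]
        have hl : ¬ G.Adj v v := G.loopless.irrefl v
        have hvv : v = v := rfl
        tauto
      · rw [hi', s1, s3 j hj]
        simp only [double_adj', switch_adj', Xor', Xor, ne_eq]
        have hj2 : ¬ v = j := fun h => hj h.symm
        have hvv : v = v ∨ j = v := Or.inl rfl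
        tauto
    · rcases eq_or_ne j v with hj' | hj
      · rw [hj', s3 i hi, s1]
        simp only [double_adj', switch_adj', Xor', Xor, ne_eq]
        have hvv : i = v ∨ v = v := Or.inr rfl
        tauto
      · rw [s3 i hi, s3 j hj]
        simp only [double_adj', switch_adj', Xor', Xor, ne_eq]
        have hne : G.Adj i j → ¬ i = j := fun h => h.ne
        tauto
  · rcases eq_or_ne i v with hi' | hi
    · rcases eq_or_ne j v with hj' | hj
      · rw [hi', hj']
        simp only [s1, s2, double_adj', switch_adj', Xor', Xor, ne_eq]
        have hl : ¬ G.Adj v v := G.loopless.irrefl v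
        have hvv : v = v := rfl
        tauto
      · rw [hi', s1, s4 j hj]
        simp only [double_adj', switch_adj', Xor', Xor, ne_eq]
        have hj2 : ¬ v = j := fun h => hj h.symm
        have hvv : v = v ∨ j = v := Or.inl rfl
        tauto
    · rcases eq_or_ne j v with hj' | hj
      · rw [hj', s3 i hi, s2]
        simp only [double_adj', switch_adj', Xor', Xor, ne_eq]
        have hvv : i = v ∨ v = v := Or.inr rfl
        tauto
      · rw [s3 i hi, s4 j hj]
        simp only [double_adj', switch_adj', Xor', Xor, ne_eq]
        have hne : G.Adj i j → ¬ i = j := fun h => h.ne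
        tauto
  · rcases eq_or_ne i v with hi' | hi
    · rcases eq_or_ne j v with hj' | hj
      · rw [hi', hj']
        simp only [s1, s2, double_adj', switch_adj', Xor', Xor, ne_eq]
        have hl : ¬ G.Adj v v := G.loopless.irrefl v
        have hvv : v = v := rfl
        tauto
      · rw [hi', s2, s3 j hj]
        simp only [double_adj', switch_adj', Xor', Xor, ne_eq]
        have hj2 : ¬ v = j := fun h => hj h.symm
        have hvv : v = v ∨ j = v := Or.inl rfl
        tauto
    · rcases eq_or_ne j v with hj' | hj
      · rw [hj', s4 i hi, s1]
        simp only [double_adj', switch_adj', Xor', Xor, ne_eq]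
        have hvv : i = v ∨ v = v := Or.inr rfl
        tauto
      · rw [s4 i hi, s3 j hj]
        simp only [double_adj', switch_adj', Xor', Xor, ne_eq]
        have hne : G.Adj i j → ¬ i = j := fun h => h.ne
        tauto
  · rcases eq_or_ne i v with hi' | hi
    · rcases eq_or_ne j v with hj' | hj
      · rw [hi', hj']
        simp only [s1, s2, double_adj', switch_adj', Xor', Xor, ne_eq]
        have hl : ¬ G.Adj v v := G.loopless.irrefl v
        have hvv : v = v := rfl
        tauto
      · rw [hi', s2, s4 j hj]
        simp only [double_adj', switch_adj', Xor', Xor, ne_eq]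
        have hj2 : ¬ v = j := fun h => hj h.symm
        have hvv : v = v ∨ j = v := Or.inl rfl
        tauto
    · rcases eq_or_ne j v with hj' | hj
      · rw [hj', s4 i hi, s2]
        simp only [double_adj', switch_adj', Xor', Xor, ne_eq]
        have hvv : i = v ∨ v = v := Or.inr rfl
        tauto
      · rw [s4 i hi, s4 j hj]
        simp only [double_adj', switch_adj', Xor', Xor, ne_eq]
        have hne : G.Adj i j → ¬ i = j := fun h => h.ne
        tauto

/-- switching equivalent graphs have isomorphic doubles. -/
theorem switchEquiv_double_iso {n : ℕ} (G G' : SimpleGraph (Fin n))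
    (h : SwitchEquiv G G') : Nonempty (double G ≃g double G') := by
  induction h with
  | refl => exact ⟨SimpleGraph.Iso.refl⟩
  | tail _ hstep ih =>
    obtain ⟨v, rfl⟩ := hstep
    obtain ⟨e₁⟩ := ih
    obtain ⟨e₂⟩ := double_switch_iso_s7 _ v
    exact ⟨e₁.trans e₂⟩
end

section
/- Every n-rainbow graph on 2n vertices arises (up to isomorphism) as the double of some graph on n vertices: if G̃ is a simple graph on 2n vertices with an n-rainbow coloring, and G is the induced subgraph on a transversal of the color classes (one vertex per color), then the doubling construction applied to G produces a graph isomorphic to G̃. -/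
open SimpleGraph

/-- every `n`-rainbow graph on `2n` vertices is isomorphic to the double
of the induced subgraph on a transversal of the color classes. -/
theorem rainbow_eq_double {W : Type*} [Fintype W] {n : ℕ} (H : SimpleGraph W)
    (hcard : Fintype.card W = 2 * n) (c : W → Fin n) (hc : IsRainbow H c)
    (t : Fin n → W) (ht : ∀ i, c (t i) = i) :
    Nonempty (double (SimpleGraph.comap t H) ≃g H) := by
  classical
  choose s hs hsu using fun i => hc (t i) i
  have hinj : Function.Injective (Sum.elim t s) := by
    rintro (i | i) (j | j) h <;> simp only [Sum.elim_inl, Sum.elim_inr] at h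
    · have : c (t i) = c (t j) := by rw [h]
      rw [ht, ht] at this; exact congrArg Sum.inl this
    · exfalso
      have hci : c (s j) = j := (hs j).2
      have : i = j := by rw [← ht i, h, hci]
      subst this
      exact (hs i).1.ne h
    · exfalso
      have hci : c (s i) = i := (hs i).2
      have : i = j := by rw [← hci, h, ht]
      subst this
      exact (hs i).1.ne h.symm
    · have : c (s i) = c (s j) := by rw [h]
      rw [(hs i).2, (hs j).2] at this; exact congrArg Sum.inr this
  have hbij : Function.Bijective (Sum.elim t s) := by
    rw [Fintype.bijective_iff_injective_and_card]
    refine ⟨hinj, by simp [hcard, two_mul]⟩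
  have hmem : ∀ w : W, w = t (c w) ∨ w = s (c w) := by
    intro w
    obtain ⟨x, hx⟩ := hbij.2 w
    rcases x with i | i
    · left; simp only [Sum.elim_inl] at hx
      rw [← hx, ht]
    · right; simp only [Sum.elim_inr] at hx
      rw [← hx, (hs i).2]
  have key : ∀ v (j : Fin n), H.Adj v (t j) ↔ ¬ H.Adj v (s j) := by
    intro v j
    obtain ⟨w, ⟨hw1, hw2⟩, hwu⟩ := hc v j
    have htne : t j ≠ s j := (hs j).1.ne
    have hw : w = t j ∨ w = s j := by
      have := hmem w; rwa [hw2] at this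
    constructor
    · intro hadj hadj'
      have h1 := hwu (t j) ⟨hadj, ht j⟩
      have h2 := hwu (s j) ⟨hadj', (hs j).2⟩
      exact htne (h1.trans h2.symm)
    · intro hna
      rcases hw with h | h
      · rwa [h] at hw1
      · rw [h] at hw1; exact absurd hw1 hna
  have lemA : ∀ i j, H.Adj (t i) (s j) ↔ ¬ H.Adj (t i) (t j) := by
    intro i j
    have := key (t i) j
    tauto
  have lemB : ∀ i j, H.Adj (s i) (s j) ↔ H.Adj (t i) (t j) := by
    intro i j
    rw [H.adj_comm (t i) (t j), key (t j) i, H.adj_comm (t j) (s i), ← not_iff_not,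
      ← key (s i) j, H.adj_comm]
    exact not_not.symm
  have lemC : ∀ i j, H.Adj (s i) (t j) ↔ ¬ H.Adj (t i) (t j) := by
    intro i j
    rw [H.adj_comm (s i) (t j), H.adj_comm (t i) (t j), key (t j) i, H.adj_comm]
    exact not_not.symm
  refine ⟨{ toEquiv := Equiv.ofBijective (Sum.elim t s) hbij, map_rel_iff' := ?_ }⟩
  intro a b
  simp only [Equiv.coe_fn_mk, Equiv.ofBijective_apply]
  rw [double, SimpleGraph.fromRel_adj]
  rcases a with i | i <;> rcases b with j | j <;>
    simp only [Sum.elim_inl, Sum.elim_inr, SimpleGraph.comap_adj, ne_eq,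
      Sum.inl.injEq, Sum.inr.injEq, reduceCtorEq, not_false_eq_true, true_and]
  · constructor
    · intro h
      exact ⟨fun hij => H.irrefl (hij ▸ h), Or.inl h⟩
    · rintro ⟨_, h | h⟩
      · exact h
      · exact h.symm
  · rw [lemA]
    by_cases hij : i = j
    · subst hij
      simp [H.irrefl]
    · have hsymm := H.adj_comm (t i) (t j)
      tauto
  · rw [lemC]
    by_cases hij : i = j
    · subst hij
      simp [H.irrefl]
    · have hsymm := H.adj_comm (t i) (t j)
      tauto
  · rw [lemB]
    constructor
    · intro h
      exact ⟨fun hij => H.irrefl (hij ▸ h), Or.inl h⟩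
    · rintro ⟨_, h | h⟩
      · exact h
      · exact h.symm
end

section
/- Let A and B be n×n Seidel matrices with Ã = P B̃ P⁻¹ for a 2n×2n permutation matrix P = [[P₁,P₂],[P₃,P₄]] (in n×n blocks), where M̃ := [[M, I−M],[I−M, M]]. Then with Z := (P₁ − P₂ − P₃ + P₄)/2, one has A − I = Z (B − I) Zᵀ. -/
open SimpleGraph Matrix

/-- if `Ã = P B̃ P⁻¹`, then `A − I = Z (B − I) Zᵀ` where
`Z = (P₁ − P₂ − P₃ + P₄)/2`. -/
theorem tilde_conj_Z {n : ℕ} (A B : Matrix (Fin n) (Fin n) ℝ)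
    (hA : IsSeidel A) (hB : IsSeidel B)
    (P : Matrix (Fin n ⊕ Fin n) (Fin n ⊕ Fin n) ℝ) (hP : IsPermMatrix P)
    (h : tildeMat A = P * tildeMat B * P⁻¹) :
    A - 1 =
      ((1/2 : ℝ) • (P.toBlocks₁₁ - P.toBlocks₁₂ - P.toBlocks₂₁ + P.toBlocks₂₂)) *
        (B - 1) *
      (((1/2 : ℝ) • (P.toBlocks₁₁ - P.toBlocks₁₂ - P.toBlocks₂₁ + P.toBlocks₂₂)))ᵀ := by
  classical
  obtain ⟨σ, rfl⟩ := hP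
  set P : Matrix (Fin n ⊕ Fin n) (Fin n ⊕ Fin n) ℝ := σ.permMatrix ℝ with hPdef
  have hPPt : P * Pᵀ = 1 := by
    rw [hPdef, Equiv.Perm.permMatrix, ← PEquiv.toMatrix_symm, ← PEquiv.toMatrix_trans,
      ← Equiv.toPEquiv_symm, ← Equiv.toPEquiv_trans]
    simp
  have hPtP : Pᵀ * P = 1 := mul_eq_one_comm.mp hPPt
  have hPinv : P⁻¹ = Pᵀ := Matrix.inv_eq_right_inv hPPt
  rw [hPinv] at h
  have h' : tildeMat A * P = P * tildeMat B := by
    rw [h, mul_assoc, mul_assoc, hPtP, mul_one]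
  set P1 := P.toBlocks₁₁ with hP1
  set P2 := P.toBlocks₁₂ with hP2
  set P3 := P.toBlocks₂₁ with hP3
  set P4 := P.toBlocks₂₂ with hP4
  have hPB : P = Matrix.fromBlocks P1 P2 P3 P4 := (Matrix.fromBlocks_toBlocks P).symm
  rw [hPB] at h' hPPt
  rw [tildeMat, tildeMat, Matrix.fromBlocks_multiply, Matrix.fromBlocks_multiply] at h'
  rw [Matrix.fromBlocks_transpose, Matrix.fromBlocks_multiply, ← Matrix.fromBlocks_one] at hPPt
  have e11 : A * P1 + (1 - A) * P3 = P1 * B + P2 * (1 - B) := by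
    simpa using congrArg Matrix.toBlocks₁₁ h'
  have e12 : A * P2 + (1 - A) * P4 = P1 * (1 - B) + P2 * B := by
    simpa using congrArg Matrix.toBlocks₁₂ h'
  have e21 : (1 - A) * P1 + A * P3 = P3 * B + P4 * (1 - B) := by
    simpa using congrArg Matrix.toBlocks₂₁ h'
  have e22 : (1 - A) * P2 + A * P4 = P3 * (1 - B) + P4 * B := by
    simpa using congrArg Matrix.toBlocks₂₂ h'
  have o11 : P1 * P1ᵀ + P2 * P2ᵀ = 1 := by
    simpa only [Matrix.toBlocks_fromBlocks₁₁] using congrArg Matrix.toBlocks₁₁ hPPt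
  have o12 : P1 * P3ᵀ + P2 * P4ᵀ = 0 := by
    simpa only [Matrix.toBlocks_fromBlocks₁₂] using congrArg Matrix.toBlocks₁₂ hPPt
  have o21 : P3 * P1ᵀ + P4 * P2ᵀ = 0 := by
    simpa only [Matrix.toBlocks_fromBlocks₂₁] using congrArg Matrix.toBlocks₂₁ hPPt
  have o22 : P3 * P3ᵀ + P4 * P4ᵀ = 1 := by
    simpa only [Matrix.toBlocks_fromBlocks₂₂] using congrArg Matrix.toBlocks₂₂ hPPt
  set W : Matrix (Fin n) (Fin n) ℝ := P1 - P2 - P3 + P4 with hWdef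
  set V : Matrix (Fin n) (Fin n) ℝ := P1 + P2 - P3 - P4 with hVdef
  set Wt : Matrix (Fin n) (Fin n) ℝ := P1ᵀ - P2ᵀ - P3ᵀ + P4ᵀ with hWtdef
  set Vt : Matrix (Fin n) (Fin n) ℝ := P1ᵀ + P2ᵀ - P3ᵀ - P4ᵀ with hVtdef
  have hWt : Wᵀ = Wt := by
    rw [hWdef, hWtdef]
    simp [Matrix.transpose_add, Matrix.transpose_sub]
  have hW : (A + A - 1) * W = W * (B + B - 1) := by
    rw [hWdef]
    linear_combination (norm := noncomm_ring) e11 - e12 - e21 + e22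
  have hV : (A + A - 1) * V = V := by
    rw [hVdef]
    linear_combination (norm := noncomm_ring) e11 + e12 - e21 - e22
  have hS : W * Wt + V * Vt = 1 + 1 + 1 + 1 := by
    rw [hWdef, hVdef, hWtdef, hVtdef]
    linear_combination (norm := noncomm_ring) o11 + o11 - o12 - o12 - o21 - o21 + o22 + o22
  have k1 : (A + A - 1) * (W * Wt) = W * (B + B - 1) * Wt := by
    rw [← mul_assoc, hW]
  have k3 : (A + A - 1) * (V * Vt) = V * Vt := by
    rw [← mul_assoc, hV]
  have k2 : (A + A - 1) * (W * Wt) = (A + A - 1) * (1 + 1 + 1 + 1) - V * Vt := by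
    have hWWt : W * Wt = (1 + 1 + 1 + 1) - V * Vt := by
      linear_combination (norm := noncomm_ring) hS
    rw [hWWt]
    linear_combination (norm := noncomm_ring) -k3
  have main2 : W * (B + B - 1) * Wt = (A + A - 1) * (1 + 1 + 1 + 1) - V * Vt := k1.symm.trans k2
  have main3 : W * (B - 1) * Wt + W * (B - 1) * Wt =
      ((A - 1) + (A - 1)) + ((A - 1) + (A - 1)) + (((A - 1) + (A - 1)) + ((A - 1) + (A - 1))) := by
    linear_combination (norm := noncomm_ring) main2 - hS
  have hT : W * (B - 1) * Wt = (A - 1) + (A - 1) + ((A - 1) + (A - 1)) := by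
    apply smul_right_injective (Matrix (Fin n) (Fin n) ℝ) (two_ne_zero (α := ℝ))
    show (2:ℝ) • (W * (B - 1) * Wt) = (2:ℝ) • (A - 1 + (A - 1) + (A - 1 + (A - 1)))
    rw [two_smul, two_smul]
    linear_combination (norm := noncomm_ring) main3
  rw [Matrix.transpose_smul, hWt, smul_mul_assoc, smul_mul_assoc, mul_smul_comm, smul_smul, hT]
  module
end

section
/- If P = [[P₁,P₂],[P₃,P₄]] is a 2n×2n permutation matrix in n×n blocks, then Z := (P₁ − P₂ − P₃ + P₄)/2 is a signed half-permutation matrix. -/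
open SimpleGraph

lemma halfline_helper {n : ℕ} (a b : Fin n ⊕ Fin n) (hab : a ≠ b) :
    HalfLine (fun j : Fin n => (1/2 : ℝ) *
      ((if a = Sum.inl j then 1 else 0) - (if a = Sum.inr j then 1 else 0)
        - (if b = Sum.inl j then 1 else 0) + (if b = Sum.inr j then 1 else 0))) := by
  rcases a with a | a <;> rcases b with b | b
  · have hab' : a ≠ b := by simpa using hab
    exact Or.inr ⟨a, b, hab', by simp [hab', Ne.symm hab'] <;> norm_num,
      by simp [hab', Ne.symm hab'] <;> norm_num,
      fun l hl1 hl2 => by simp [Ne.symm hl1, Ne.symm hl2]⟩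
  · by_cases h : a = b
    · subst h
      exact Or.inl ⟨a, by simp <;> norm_num, fun k hk => by simp [Ne.symm hk]⟩
    · exact Or.inr ⟨a, b, h, by simp [h, Ne.symm h] <;> norm_num,
        by simp [h, Ne.symm h] <;> norm_num,
        fun l hl1 hl2 => by simp [Ne.symm hl1, Ne.symm hl2]⟩
  · by_cases h : a = b
    · subst h
      exact Or.inl ⟨a, by simp <;> norm_num, fun k hk => by simp [Ne.symm hk]⟩
    · exact Or.inr ⟨a, b, h, by simp [h, Ne.symm h] <;> norm_num,
        by simp [h, Ne.symm h] <;> norm_num,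
        fun l hl1 hl2 => by simp [Ne.symm hl1, Ne.symm hl2]⟩
  · have hab' : a ≠ b := by simpa using hab
    exact Or.inr ⟨a, b, hab', by simp [hab', Ne.symm hab'] <;> norm_num,
      by simp [hab', Ne.symm hab'] <;> norm_num,
      fun l hl1 hl2 => by simp [Ne.symm hl1, Ne.symm hl2]⟩

/-- `Z = (P₁ − P₂ − P₃ + P₄)/2` is a signed half-permutation matrix. -/
theorem Z_isSignedHalfPerm {n : ℕ}
    (P : Matrix (Fin n ⊕ Fin n) (Fin n ⊕ Fin n) ℝ) (hP : IsPermMatrix P) :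
    IsSignedHalfPermMatrix
      ((1/2 : ℝ) • (P.toBlocks₁₁ - P.toBlocks₁₂ - P.toBlocks₂₁ + P.toBlocks₂₂)) := by
  obtain ⟨σ, rfl⟩ := hP
  have hent : ∀ x y, (σ.permMatrix ℝ) x y = if σ x = y then (1:ℝ) else 0 := fun x y => by
    simp [Equiv.Perm.permMatrix, PEquiv.toMatrix, Equiv.toPEquiv, eq_comm]
  have key : ∀ x y, (if σ.symm y = x then (1:ℝ) else 0) = if σ x = y then 1 else 0 := by
    intro x y
    by_cases h : σ x = y
    · simp [← h]
    · rw [if_neg h, if_neg]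
      intro hc
      exact h (by rw [← hc]; simp)
  constructor
  · intro i
    have h := halfline_helper (σ (Sum.inl i)) (σ (Sum.inr i))
      (fun h => by simpa using σ.injective h)
    convert h using 1
    funext j
    simp only [Matrix.smul_apply, Matrix.sub_apply, Matrix.add_apply, Matrix.toBlocks₁₁,
      Matrix.toBlocks₁₂, Matrix.toBlocks₂₁, Matrix.toBlocks₂₂, Matrix.of_apply, hent,
      smul_eq_mul]
  · intro j
    have h := halfline_helper (σ.symm (Sum.inl j)) (σ.symm (Sum.inr j))
      (fun h => by simpa using σ.symm.injective h)
    convert h using 1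
    funext i
    simp only [Matrix.smul_apply, Matrix.sub_apply, Matrix.add_apply, Matrix.toBlocks₁₁,
      Matrix.toBlocks₁₂, Matrix.toBlocks₂₁, Matrix.toBlocks₂₂, Matrix.of_apply, hent, key,
      smul_eq_mul]
    ring
end

section
/- Let M, N be m×m real matrices with |m_ij| ≤ 1 for all entries of M and n_ij ∈ {1, −1} for all entries of N. If MZ = N for some signed half-permutation matrix Z, then every entry of M is 1 or −1, and moreover MQ = N for every integration Q of Z. -/
open SimpleGraph

/-- if `MZ = N` with `|M| ≤ 1` entrywise, `N` entrywise `±1`, and `Z` a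
signed half-permutation matrix, then `M` is entrywise `±1` and `MQ = N` for every
integration `Q` of `Z`. -/
theorem halfPerm_rigidity {m : Type*} [Fintype m] (M N Z : Matrix m m ℝ)
    (hM : ∀ i j, |M i j| ≤ 1) (hN : ∀ i j, N i j = 1 ∨ N i j = -1)
    (hZ : IsSignedHalfPermMatrix Z) (h : M * Z = N) :
    (∀ i j, M i j = 1 ∨ M i j = -1) ∧
      ∀ Q : Matrix m m ℝ, IsIntegration Q Z → M * Q = N := by
  classical
  have hsum : ∀ i j, ∑ k, M i k * Z k j = N i j := by
    intro i j
    have := congrFun (congrFun h i) j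
    simpa [Matrix.mul_apply] using this
  -- key: in a two-half column, both products give N i j
  have key : ∀ i j p q, p ≠ q →
      (Z p j = 1/2 ∨ Z p j = -(1/2)) → (Z q j = 1/2 ∨ Z q j = -(1/2)) →
      (∀ l, l ≠ p → l ≠ q → Z l j = 0) →
      M i p * (2 * Z p j) = N i j ∧ M i q * (2 * Z q j) = N i j := by
    intro i j p q hpq hp hq hz
    have hs : M i p * Z p j + M i q * Z q j = N i j := by
      rw [← hsum i j]
      rw [Finset.sum_eq_add_of_mem p q (Finset.mem_univ p) (Finset.mem_univ q) hpq]
      intro l _ hl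
      rw [hz l hl.1 hl.2, mul_zero]
    have h1 := abs_le.mp (hM i p)
    have h2 := abs_le.mp (hM i q)
    rcases hN i j with hn | hn <;> rcases hp with hp | hp <;> rcases hq with hq | hq <;>
      rw [hp, hq, hn] at hs ⊢ <;>
      exact ⟨by linarith [h1.1, h1.2, h2.1, h2.2], by linarith [h1.1, h1.2, h2.1, h2.2]⟩
  -- single column lemma
  have single : ∀ i j p, (Z p j = 1 ∨ Z p j = -1) → (∀ l, l ≠ p → Z l j = 0) →
      M i p * Z p j = N i j := by
    intro i j p _ hz
    rw [← hsum i j]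
    rw [Finset.sum_eq_single_of_mem p (Finset.mem_univ p)]
    intro l _ hlp
    rw [hz l hlp, mul_zero]
  have main : ∀ i k, M i k = 1 ∨ M i k = -1 := by
    intro i k
    -- find a column j where Z k j ≠ 0
    obtain ⟨j, hj⟩ : ∃ j, Z k j ≠ 0 := by
      rcases hZ.1 k with ⟨j, hj, _⟩ | ⟨j, k', _, hj, _, _⟩
      · exact ⟨j, by rcases hj with hj | hj <;> rw [hj] <;> norm_num⟩
      · exact ⟨j, by rcases hj with hj | hj <;> rw [hj] <;> norm_num⟩
    rcases hZ.2 j with ⟨p, hp, hz⟩ | ⟨p, q, hpq, hp, hq, hz⟩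
    · simp only at hp hz
      have hk : k = p := by by_contra hkp; exact hj (hz k hkp)
      subst hk
      have := single i j k hp hz
      rcases hp with hp | hp <;> rw [hp] at this <;> rcases hN i j with hn | hn <;>
        rw [hn] at this <;> [left; right; right; left] <;> linarith
    · simp only at hp hq hz
      have hp' : Z p j = 1/2 ∨ Z p j = -(1/2) := by
        rcases hp with hp | hp <;> [left; right] <;> rw [hp] <;> norm_num
      have hq' : Z q j = 1/2 ∨ Z q j = -(1/2) := by
        rcases hq with hq | hq <;> [left; right] <;> rw [hq] <;> norm_num
      have hk : k = p ∨ k = q := by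
        by_contra hc
        push_neg at hc
        exact hj (hz k hc.1 hc.2)
      obtain ⟨h1, h2⟩ := key i j p q hpq hp' hq' hz
      rcases hk with rfl | rfl
      · rcases hp' with hp | hp <;> rw [hp] at h1 <;> rcases hN i j with hn | hn <;>
          rw [hn] at h1 <;> [left; right; right; left] <;> linarith
      · rcases hq' with hq | hq <;> rw [hq] at h2 <;> rcases hN i j with hn | hn <;>
          rw [hn] at h2 <;> [left; right; right; left] <;> linarith
  refine ⟨main, ?_⟩
  intro Q ⟨hQperm, hQint⟩
  ext i j
  rw [Matrix.mul_apply]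
  rcases hZ.2 j with ⟨p, hp, hz⟩ | ⟨p, q, hpq, hp, hq, hz⟩
  · simp only at hp hz
    -- single column: Q agrees with Z
    have hQp : Q p j = Z p j := (hQint p j).1 hp
    have hQz : ∀ l, l ≠ p → Q l j = 0 := fun l hl => (hQint l j).2.2 (hz l hl)
    rw [Finset.sum_eq_single_of_mem p (Finset.mem_univ p)
      (fun l _ hl => by rw [hQz l hl, mul_zero])]
    rw [hQp]
    exact single i j p hp hz
  · simp only at hp hq hz
    have hp' : Z p j = 1/2 ∨ Z p j = -(1/2) := by
      rcases hp with hp | hp <;> [left; right] <;> rw [hp] <;> norm_num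
    have hq' : Z q j = 1/2 ∨ Z q j = -(1/2) := by
      rcases hq with hq | hq <;> [left; right] <;> rw [hq] <;> norm_num
    obtain ⟨h1, h2⟩ := key i j p q hpq hp' hq' hz
    have hQz : ∀ l, l ≠ p → l ≠ q → Q l j = 0 := fun l h1 h2 =>
      (hQint l j).2.2 (hz l h1 h2)
    obtain ⟨r, hr, hrz⟩ := hQperm.2 j
    simp only at hr hrz
    have hrpq : r = p ∨ r = q := by
      by_contra hc
      push_neg at hc
      rcases hr with hr | hr <;> rw [hQz r hc.1 hc.2] at hr <;> norm_num at hr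
    have hQp' : Q p j = 2 * Z p j ∨ Q p j = 0 := (hQint p j).2.1 (by
      rcases hp with hp | hp <;> [left; right] <;> rw [hp] <;> norm_num)
    have hQq' : Q q j = 2 * Z q j ∨ Q q j = 0 := (hQint q j).2.1 (by
      rcases hq with hq | hq <;> [left; right] <;> rw [hq] <;> norm_num)
    rw [Finset.sum_eq_add_of_mem p q (Finset.mem_univ p) (Finset.mem_univ q) hpq
      (fun l _ hl => by rw [hQz l hl.1 hl.2, mul_zero])]
    rcases hrpq with rfl | rfl
    · have hQq0 : Q q j = 0 := hrz q (Ne.symm hpq)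
      have hQp2 : Q r j = 2 * Z r j := by
        rcases hQp' with h' | h'
        · exact h'
        · rw [h'] at hr; rcases hr with hr | hr <;> norm_num at hr
      rw [hQq0, hQp2, mul_zero, add_zero]
      exact h1
    · have hQp0 : Q p j = 0 := hrz p hpq
      have hQq2 : Q r j = 2 * Z r j := by
        rcases hQq' with h' | h'
        · exact h'
        · rw [h'] at hr; rcases hr with hr | hr <;> norm_num at hr
      rw [hQp0, hQq2, mul_zero, zero_add]
      exact h2
end

section
/- If two n×n Seidel matrices A and B satisfy à = P B̃ P⁻¹ for some 2n×2n permutation matrix P, where M̃ := [[M, I−M],[I−M, M]], then there exists an n×n signed permutation matrix Q with A = Q B Q⁻¹. -/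
open SimpleGraph

section AuxTildeConj

private def pbase {n : ℕ} : Fin n ⊕ Fin n → Fin n := Sum.elim id id

private noncomputable def sgn {n : ℕ} : Fin n ⊕ Fin n → ℝ :=
  Sum.elim (fun _ => 1) (fun _ => -1)

private lemma sgn_sq {n : ℕ} (x : Fin n ⊕ Fin n) : sgn x * sgn x = 1 := by
  cases x <;> simp [sgn]

private lemma sgn_pm {n : ℕ} (x : Fin n ⊕ Fin n) : sgn x = 1 ∨ sgn x = -1 := by
  cases x <;> simp [sgn]

private lemma tilde_apply {n : ℕ} (M : Matrix (Fin n) (Fin n) ℝ) (x y : Fin n ⊕ Fin n)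
    (hxy : pbase x ≠ pbase y) :
    tildeMat M x y = sgn x * sgn y * M (pbase x) (pbase y) := by
  cases x with
  | inl i =>
    cases y with
    | inl j => simp [tildeMat, sgn, pbase]
    | inr j =>
        have hij : i ≠ j := hxy
        simp [tildeMat, sgn, pbase, Matrix.sub_apply, Matrix.one_apply_ne hij]
  | inr i =>
    cases y with
    | inl j =>
        have hij : i ≠ j := hxy
        simp [tildeMat, sgn, pbase, Matrix.sub_apply, Matrix.one_apply_ne hij]
    | inr j => simp [tildeMat, sgn, pbase]

private lemma count_pbase {n : ℕ} (σ : Equiv.Perm (Fin n ⊕ Fin n)) (j : Fin n) :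
    (Finset.univ.filter fun i => pbase (σ (Sum.inl i)) = j).card
      + (Finset.univ.filter fun i => pbase (σ (Sum.inr i)) = j).card ≤ 2 := by
  classical
  have h1 : ((Finset.univ : Finset (Fin n ⊕ Fin n)).filter fun x => pbase (σ x) = j).card
      = (Finset.univ.filter fun i => pbase (σ (Sum.inl i)) = j).card
        + (Finset.univ.filter fun i => pbase (σ (Sum.inr i)) = j).card := by
    simp only [Finset.card_filter]
    exact Fintype.sum_sum_type _
  have h2 : ((Finset.univ : Finset (Fin n ⊕ Fin n)).filter fun x => pbase (σ x) = j)
      ⊆ {σ.symm (Sum.inl j), σ.symm (Sum.inr j)} := by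
    intro x hx
    simp only [Finset.mem_filter] at hx
    have hx' := hx.2
    have : σ x = Sum.inl j ∨ σ x = Sum.inr j := by
      cases hσx : σ x with
      | inl a =>
          left; rw [hσx] at hx'
          have : a = j := by simpa [pbase] using hx'
          rw [this]
      | inr a =>
          right; rw [hσx] at hx'
          have : a = j := by simpa [pbase] using hx'
          rw [this]
    rcases this with hh | hh
    · have : x = σ.symm (Sum.inl j) := by rw [← hh, Equiv.symm_apply_apply]
      simp [this]
    · have : x = σ.symm (Sum.inr j) := by rw [← hh, Equiv.symm_apply_apply]
      simp [this]
  calc (Finset.univ.filter fun i => pbase (σ (Sum.inl i)) = j).card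
        + (Finset.univ.filter fun i => pbase (σ (Sum.inr i)) = j).card
      = ((Finset.univ : Finset (Fin n ⊕ Fin n)).filter fun x => pbase (σ x) = j).card :=
        h1.symm
    _ ≤ ({σ.symm (Sum.inl j), σ.symm (Sum.inr j)} : Finset (Fin n ⊕ Fin n)).card :=
        Finset.card_le_card h2
    _ ≤ 2 := (Finset.card_insert_le _ _).trans (by simp)

private lemma exists_injective_choice {n : ℕ} (f g : Fin n → Fin n)
    (hcount : ∀ j, (Finset.univ.filter fun i => f i = j).card
      + (Finset.univ.filter fun i => g i = j).card ≤ 2) :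
    ∃ w : Fin n → Fin n, Function.Injective w ∧ ∀ i, w i = f i ∨ w i = g i := by
  classical
  have hall : ∀ s : Finset (Fin n),
      s.card ≤ (s.biUnion fun i => ({f i, g i} : Finset (Fin n))).card := by
    intro s
    set J := s.biUnion (fun i => ({f i, g i} : Finset (Fin n))) with hJ
    have hf : ∀ i ∈ s, f i ∈ J := fun i hi => Finset.mem_biUnion.mpr ⟨i, hi, by simp⟩
    have hg : ∀ i ∈ s, g i ∈ J := fun i hi => Finset.mem_biUnion.mpr ⟨i, hi, by simp⟩
    have h1 : s.card = ∑ j ∈ J, (s.filter fun i => f i = j).card :=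
      Finset.card_eq_sum_card_fiberwise hf
    have h2 : s.card = ∑ j ∈ J, (s.filter fun i => g i = j).card :=
      Finset.card_eq_sum_card_fiberwise hg
    have h3 : 2 * s.card ≤ 2 * J.card := by
      calc 2 * s.card
          = ∑ j ∈ J, ((s.filter fun i => f i = j).card
              + (s.filter fun i => g i = j).card) := by
            rw [Finset.sum_add_distrib, ← h1, ← h2]; ring
        _ ≤ ∑ _j ∈ J, 2 := by
            refine Finset.sum_le_sum fun j _ => le_trans (add_le_add
              (Finset.card_le_card (Finset.filter_subset_filter _ (Finset.subset_univ s)))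
              (Finset.card_le_card (Finset.filter_subset_filter _ (Finset.subset_univ s))))
              (hcount j)
        _ = 2 * J.card := by rw [Finset.sum_const, smul_eq_mul, mul_comm]
    exact Nat.le_of_mul_le_mul_left h3 (by norm_num)
  obtain ⟨w, hwi, hwm⟩ := (Finset.all_card_le_biUnion_card_iff_exists_injective
    (fun i => ({f i, g i} : Finset (Fin n)))).mp hall
  exact ⟨w, hwi, fun i => by simpa using hwm i⟩

end AuxTildeConj

/-- if `Ã = P B̃ P⁻¹` for a permutation matrix `P`, then `A = Q B Q⁻¹`
for some signed permutation matrix `Q`. -/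
theorem tilde_conj_signed {n : ℕ} (A B : Matrix (Fin n) (Fin n) ℝ)
    (hA : IsSeidel A) (hB : IsSeidel B)
    (P : Matrix (Fin n ⊕ Fin n) (Fin n ⊕ Fin n) ℝ) (hP : IsPermMatrix P)
    (h : tildeMat A = P * tildeMat B * P⁻¹) :
    ∃ Q : Matrix (Fin n) (Fin n) ℝ, IsSignedPermMatrix Q ∧ A = Q * B * Q⁻¹ := by
  classical
  obtain ⟨σ, rfl⟩ := hP
  have hPapply : ∀ x y : Fin n ⊕ Fin n, (σ.permMatrix ℝ) x y = if y = σ x then 1 else 0 := by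
    intro x y
    simp [Equiv.Perm.permMatrix, PEquiv.toMatrix_apply, Equiv.toPEquiv_apply, eq_comm]
  have hOrtho : σ.permMatrix ℝ * (Matrix.transpose (σ.permMatrix ℝ)) = 1 := by
    ext x y
    rw [Matrix.mul_apply]
    simp only [Matrix.transpose_apply, hPapply]
    rw [Finset.sum_eq_single (σ x)]
    · by_cases hxy : x = y
      · subst hxy; simp [Matrix.one_apply]
      · have : σ x ≠ σ y := fun hc => hxy (σ.injective hc)
        simp [Matrix.one_apply, hxy, this]
    · intro k _ hk
      simp [hk]
    · intro hk
      exact absurd (Finset.mem_univ _) hk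
  have hinv : (σ.permMatrix ℝ)⁻¹ = (Matrix.transpose (σ.permMatrix ℝ)) := Matrix.inv_eq_right_inv hOrtho
  have hMulL : ∀ (M : Matrix (Fin n ⊕ Fin n) (Fin n ⊕ Fin n) ℝ) x y,
      (σ.permMatrix ℝ * M) x y = M (σ x) y := by
    intro M x y
    rw [Matrix.mul_apply]
    rw [Finset.sum_eq_single (σ x)]
    · rw [hPapply, if_pos rfl, one_mul]
    · intro k _ hk; rw [hPapply, if_neg hk, zero_mul]
    · intro hk; exact absurd (Finset.mem_univ _) hk
  have hMulR : ∀ (M : Matrix (Fin n ⊕ Fin n) (Fin n ⊕ Fin n) ℝ) x y,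
      (M * (Matrix.transpose (σ.permMatrix ℝ))) x y = M x (σ y) := by
    intro M x y
    rw [Matrix.mul_apply]
    rw [Finset.sum_eq_single (σ y)]
    · rw [Matrix.transpose_apply, hPapply, if_pos rfl, mul_one]
    · intro k _ hk; rw [Matrix.transpose_apply, hPapply, if_neg hk, mul_zero]
    · intro hk; exact absurd (Finset.mem_univ _) hk
  have hEntry : ∀ x y, tildeMat A x y = tildeMat B (σ x) (σ y) := by
    intro x y
    calc tildeMat A x y = (σ.permMatrix ℝ * tildeMat B * (σ.permMatrix ℝ)⁻¹) x y := by rw [h]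
      _ = (σ.permMatrix ℝ * tildeMat B) x (σ y) := by rw [hinv, hMulR]
      _ = tildeMat B (σ x) (σ y) := hMulL _ _ _
  obtain ⟨w, hw, hwfg⟩ := exists_injective_choice
    (fun i => pbase (σ (Sum.inl i))) (fun i => pbase (σ (Sum.inr i)))
    (fun j => count_pbase σ j)
  have hzex : ∀ i, ∃ x : Fin n ⊕ Fin n, pbase x = i ∧ pbase (σ x) = w i := by
    intro i
    rcases hwfg i with hh | hh
    · exact ⟨Sum.inl i, rfl, hh.symm⟩
    · exact ⟨Sum.inr i, rfl, hh.symm⟩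
  choose z hz1 hz2 using hzex
  have key : ∀ i j, A i j
      = (sgn (z i) * sgn (σ (z i))) * (sgn (z j) * sgn (σ (z j))) * B (w i) (w j) := by
    intro i j
    by_cases hij : i = j
    · subst hij
      rw [hA.2.1 i, hB.2.1 (w i)]
      ring
    · have hpz : pbase (z i) ≠ pbase (z j) := by rw [hz1, hz1]; exact hij
      have hpw : pbase (σ (z i)) ≠ pbase (σ (z j)) := by
        rw [hz2, hz2]; exact fun hc => hij (hw hc)
      have e3 := hEntry (z i) (z j)
      rw [tilde_apply A (z i) (z j) hpz, tilde_apply B (σ (z i)) (σ (z j)) hpw,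
        hz1, hz1, hz2, hz2] at e3
      have s1 := sgn_sq (z i)
      have s2 := sgn_sq (z j)
      linear_combination (sgn (z i) * sgn (z j)) * e3
        - A i j * sgn (z j) * sgn (z j) * s1 - A i j * s2
  have hεpm : ∀ i, sgn (z i) * sgn (σ (z i)) = 1 ∨ sgn (z i) * sgn (σ (z i)) = -1 := by
    intro i
    rcases sgn_pm (z i) with h1 | h1 <;> rcases sgn_pm (σ (z i)) with h2 | h2 <;>
      rw [h1, h2] <;> norm_num
  refine ⟨fun i k => if k = w i then sgn (z i) * sgn (σ (z i)) else 0, ⟨?_, ?_⟩, ?_⟩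
  · intro i
    exact ⟨w i, by simpa using hεpm i, fun k hk => if_neg hk⟩
  · intro j
    obtain ⟨i0, hi0⟩ := (Finite.injective_iff_bijective.mp hw).surjective j
    refine ⟨i0, by simpa [hi0.symm] using hεpm i0, fun i hi => ?_⟩
    have : j ≠ w i := fun hc => hi (hw (by rw [← hc, hi0]))
    exact if_neg this
  · set Q : Matrix (Fin n) (Fin n) ℝ :=
      fun i k => if k = w i then sgn (z i) * sgn (σ (z i)) else 0 with hQdef
    have hQapply : ∀ i k, Q i k = if k = w i then sgn (z i) * sgn (σ (z i)) else 0 :=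
      fun i k => rfl
    have hQQt : Q * Matrix.transpose Q = 1 := by
      ext i j
      rw [Matrix.mul_apply]
      rw [Finset.sum_eq_single (w i)]
      · by_cases hij : i = j
        · subst hij
          rw [Matrix.transpose_apply, hQapply, if_pos rfl, Matrix.one_apply_eq]
          nlinarith [sgn_sq (z i), sgn_sq (σ (z i))]
        · have hwij : w i ≠ w j := fun hc => hij (hw hc)
          simp [hQapply, Matrix.transpose_apply, hwij, Matrix.one_apply_ne hij]
      · intro k _ hk
        simp [hQapply, Matrix.transpose_apply, hk]
      · intro hk; exact absurd (Finset.mem_univ _) hk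
    have hQinv : Q⁻¹ = Matrix.transpose Q := Matrix.inv_eq_right_inv hQQt
    have hQB : ∀ i l, (Q * B) i l = (sgn (z i) * sgn (σ (z i))) * B (w i) l := by
      intro i l
      rw [Matrix.mul_apply]
      rw [Finset.sum_eq_single (w i)]
      · simp [hQapply]
      · intro k _ hk; simp [hQapply, hk]
      · intro hk; exact absurd (Finset.mem_univ _) hk
    rw [hQinv]
    ext i j
    rw [Matrix.mul_apply]
    rw [Finset.sum_eq_single (w j)]
    · rw [hQB, Matrix.transpose_apply, hQapply]
      rw [if_pos rfl, key i j]
      ring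
    · intro k _ hk
      rw [Matrix.transpose_apply, hQapply, if_neg hk, mul_zero]
    · intro hk; exact absurd (Finset.mem_univ _) hk
end
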